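/- Let i, j, r, s be pairwise distinct indices in {1, …, 2g+2}, and choose symmetric ratios for (i,j), for (s,j) and for (s,i), with associated symmetric roots ℓ_{ijk}, ℓ_{sjk}, ℓ_{sik}. Then ℓ_{ijr}^{4g} = ( (ℓ_{sji} − ℓ_{sjr}) / ℓ_{sij} )^{4g}; that is, ℓ_{ijr} = (ℓ_{sji} − ℓ_{sjr})/ℓ_{sij} up to a 4g-th root of unity, independently of the choices of symmetric ratios. -/

import Mathlib

open Finset

/-- For pairwise distinct `i, j, r, s` and any choices of symmetric ratios for
`(i,j)`, `(s,j)` and `(s,i)`, the associated symmetric roots satisfy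
`ℓ_{ijr}^{4g} = ((ℓ_{sji} − ℓ_{sjr})/ℓ_{sij})^{4g}`, i.e. the relation
`ℓ_{ijr} = (ℓ_{sji} − ℓ_{sjr})/ℓ_{sij}` holds up to a `4g`-th root of unity, independently
of the choices of symmetric ratios. -/
theorem symmetric_roots_relation_d
    (g : ℕ) (hg : 1 ≤ g) (K : Type*) [Field K]
    (α : Fin (2*g+2) → K) (hα : Function.Injective α)
    (d : Fin (2*g+2) → K)
    (hd : ∀ m, d m = ∏ n ∈ univ.erase m, (α m - α n))
    (i j r s : Fin (2*g+2))
    (hij : i ≠ j) (hir : i ≠ r) (his : i ≠ s) (hjr : j ≠ r) (hjs : j ≠ s) (hrs : r ≠ s)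
    (pij : K) (hpij : pij ^ (4*g) = (d j / d i) ^ 2)
    (ℓij : Fin (2*g+2) → K)
    (hℓij : ∀ k, ℓij k = pij * (α i - α k) / (α j - α k))
    (psj : K) (hpsj : psj ^ (4*g) = (d j / d s) ^ 2)
    (ℓsj : Fin (2*g+2) → K)
    (hℓsj : ∀ k, ℓsj k = psj * (α s - α k) / (α j - α k))
    (psi : K) (hpsi : psi ^ (4*g) = (d i / d s) ^ 2)
    (ℓsi : Fin (2*g+2) → K)
    (hℓsi : ∀ k, ℓsi k = psi * (α s - α k) / (α i - α k)) :
    (ℓij r) ^ (4*g) = ((ℓsj i - ℓsj r) / ℓsi j) ^ (4*g) := by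

  have hαne : ∀ a b : Fin (2*g+2), a ≠ b → α a - α b ≠ 0 := fun a b h =>
    sub_ne_zero.mpr fun he => h (hα he)
  have hdne : ∀ m, d m ≠ 0 := by
    intro m
    rw [hd m]
    exact Finset.prod_ne_zero_iff.mpr fun n hn =>
      hαne m n fun h => (Finset.mem_erase.mp hn).1 h.symm
  have h4g : 4 * g ≠ 0 := by omega
  have hpsine : psi ≠ 0 := by
    intro h
    rw [h, zero_pow h4g] at hpsi
    exact (pow_ne_zero 2 (div_ne_zero (hdne i) (hdne s))) hpsi.symm
  have hji := hαne j i (Ne.symm hij)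
  have hjr := hαne j r hjr
  have hijne := hαne i j hij
  have hsj := hαne s j (Ne.symm hjs)
  set t := (α i - α r) / (α j - α r) with ht
  have h1 : ℓij r = pij * t := by rw [hℓij, ht]; ring
  have hℓsine : ℓsi j ≠ 0 := by
    rw [hℓsi]
    exact div_ne_zero (mul_ne_zero hpsine hsj) hijne
  have h2 : (ℓsj i - ℓsj r) / ℓsi j = -(psj / psi) * t := by
    rw [div_eq_iff hℓsine, hℓsj, hℓsj, hℓsi, ht]
    field_simp
    ring
  rw [h1, h2, mul_pow, mul_pow]
  have heven : Even (4 * g) := ⟨2 * g, by ring⟩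
  rw [heven.neg_pow, div_pow psj psi, hpsj, hpsi]
  congr 1
  rw [hpij]
  field_simp
  rw [mul_div_mul_right _ _ (hdne s)]
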